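/- The two-component operator P with entries P^{11} = d_x + u^2 d_y + (1/2) u^2_y, P^{12} = −(u^2_x + u^2 u^2_y)/u^1, P^{21} = (u^2_x + u^2 u^2_y)/u^1, P^{22} = 0 (defined on the domain u^1 ≠ 0) satisfies all of Mokhov's conditions for a two-dimensional Hamiltonian operator of hydrodynamic type: g^{ijα} = g^{jiα}, ∂g^{ijα}/∂u^k = b^{ijα}_k + b^{jiα}_k, and the remaining Jacobi-identity relations. -/

import Mathlib

open scoped BigOperators

/-- Partial derivative of `f` with respect to the `k`-th coordinate. -/
noncomputable def pd {n : ℕ} (k : Fin n) (f : (Fin n → ℝ) → ℝ) (x : Fin n → ℝ) : ℝ :=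
  fderiv ℝ f x (Pi.single k 1)

/-- The bracketed expression appearing in Mokhov's conditions (a5) and (a7). -/
noncomputable def mokA5 {d n : ℕ}
    (g : Fin d → Fin n → Fin n → (Fin n → ℝ) → ℝ)
    (b : Fin d → Fin n → Fin n → Fin n → (Fin n → ℝ) → ℝ)
    (α β : Fin d) (i j r q : Fin n) (x : Fin n → ℝ) : ℝ :=
  ∑ s, (g α s i x * (pd q (b β j r s) x - pd s (b β j r q) x)
        + b α i j s x * b β s r q x - b α i r s x * b β s j q x)


set_option maxHeartbeats 4000000

lemma pd_const {n : ℕ} (k : Fin n) (c : ℝ) (x : Fin n → ℝ) : pd k (fun _ => c) x = 0 := by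
  simp [pd]

lemma hasFDerivAt_proj {n : ℕ} (j : Fin n) (x : Fin n → ℝ) :
    HasFDerivAt (fun y : Fin n → ℝ => y j)
      (ContinuousLinearMap.proj j : (Fin n → ℝ) →L[ℝ] ℝ) x :=
  (ContinuousLinearMap.proj (R := ℝ) (φ := fun _ : Fin n => ℝ) j).hasFDerivAt

lemma pd_coord {n : ℕ} (k j : Fin n) (x : Fin n → ℝ) :
    pd k (fun y => y j) x = if j = k then 1 else 0 := by
  rw [pd, (hasFDerivAt_proj j x).fderiv]
  simp [Pi.single_apply]

lemma pd_neg {n : ℕ} (k : Fin n) (f : (Fin n → ℝ) → ℝ) (x : Fin n → ℝ) :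
    pd k (fun y => -(f y)) x = -(pd k f x) := by
  simp [pd, fderiv_neg]

lemma hasFDerivAt_inv0 (x : Fin 2 → ℝ) (hx : x 0 ≠ 0) :
    HasFDerivAt (fun y : Fin 2 → ℝ => (y 0)⁻¹)
      ((-(x 0 ^ 2)⁻¹) • (ContinuousLinearMap.proj 0 : (Fin 2 → ℝ) →L[ℝ] ℝ)) x :=
  (hasDerivAt_inv hx).comp_hasFDerivAt x (hasFDerivAt_proj 0 x)

lemma pd_inv' (k : Fin 2) (x : Fin 2 → ℝ) (hx : x 0 ≠ 0) :
    pd k (fun y => (y 0)⁻¹) x = if k = 0 then -(1 / x 0 ^ 2) else 0 := by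
  rw [pd, (hasFDerivAt_inv0 x hx).fderiv]
  fin_cases k <;> · simp [Pi.single_apply]; try ring

lemma pd_inv (k : Fin 2) (x : Fin 2 → ℝ) (hx : x 0 ≠ 0) :
    pd k (fun y => 1 / y 0) x = if k = 0 then -(1 / x 0 ^ 2) else 0 := by
  have h : (fun y : Fin 2 → ℝ => 1 / y 0) = fun y => (y 0)⁻¹ := by
    funext y; rw [one_div]
  rw [h, pd_inv' k x hx]

lemma pd_ratio (k : Fin 2) (x : Fin 2 → ℝ) (hx : x 0 ≠ 0) :
    pd k (fun y => y 1 / y 0) x = if k = 0 then -(x 1 / x 0 ^ 2) else 1 / x 0 := by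
  have h : (fun y : Fin 2 → ℝ => y 1 / y 0) = fun y => y 1 * (y 0)⁻¹ := by
    funext y; rw [div_eq_mul_inv]
  have hd : HasFDerivAt (fun y : Fin 2 → ℝ => y 1 * (y 0)⁻¹) _ x :=
    (hasFDerivAt_proj 1 x).mul (hasFDerivAt_inv0 x hx)
  rw [pd, h, hd.fderiv]
  fin_cases k <;> · simp [Pi.single_apply]; try field_simp

lemma pd_ratio' (k : Fin 2) (x : Fin 2 → ℝ) (hx : x 0 ≠ 0) :
    pd k (fun y => y 1 * (y 0)⁻¹) x = if k = 0 then -(x 1 / x 0 ^ 2) else 1 / x 0 := by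
  have h : (fun y : Fin 2 → ℝ => y 1 * (y 0)⁻¹) = fun y => y 1 / y 0 := by
    funext y; rw [div_eq_mul_inv]
  rw [h, pd_ratio k x hx]

/-- Mokhov's conditions (a1)–(a7) for a `d`-dimensional first-order Hamiltonian
operator of Dubrovin–Novikov type with metrics `g` and coefficients `b`, on a domain `U`. -/
def Mokhov (d n : ℕ) (U : Set (Fin n → ℝ))
    (g : Fin d → Fin n → Fin n → (Fin n → ℝ) → ℝ)
    (b : Fin d → Fin n → Fin n → Fin n → (Fin n → ℝ) → ℝ) : Prop :=
  -- (a1)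
  (∀ x ∈ U, ∀ α i j, g α i j x = g α j i x) ∧
  -- (a2)
  (∀ x ∈ U, ∀ α i j k, pd k (g α i j) x = b α i j k x + b α j i k x) ∧
  -- (a3)
  (∀ x ∈ U, ∀ α β i j r,
    (∑ s, (g α s i x * b β j r s x - g β s j x * b α i r s x))
      + (∑ s, (g β s i x * b α j r s x - g α s j x * b β i r s x)) = 0) ∧
  -- (a4)
  (∀ x ∈ U, ∀ α β i j r,
    (∑ s, (g α s i x * b β j r s x - g β s j x * b α i r s x))
      + (∑ s, (g α s j x * b β r i s x - g β s r x * b α j i s x))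
      + (∑ s, (g α s r x * b β i j s x - g β s i x * b α r j s x)) = 0) ∧
  -- (a5)
  (∀ x ∈ U, ∀ α β i j r q,
    mokA5 g b α β i j r q x + mokA5 g b β α i j r q x = 0) ∧
  -- (a6)
  (∀ x ∈ U, ∀ α β i j r q,
    ∑ s, (g β s i x * pd s (b α j r q) x
          - b β i j s x * b α s r q x - b β i r s x * b α j s q x)
    = ∑ s, (g α s j x * pd s (b β i r q) x
          - b α j i s x * b β s r q x - b β i s q x * b α j r s x)) ∧
  -- (a7)
  (∀ x ∈ U, ∀ α β i j r q k,
    pd k (mokA5 g b α β i j r q) x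
    + ((∑ s, b β s i q x * (pd s (b α j r k) x - pd k (b α j r s) x))
       + (∑ s, b β s j q x * (pd s (b α r i k) x - pd k (b α r i s) x))
       + (∑ s, b β s r q x * (pd s (b α i j k) x - pd k (b α i j s) x)))
    + pd q (mokA5 g b β α i j r k) x
    + ((∑ s, b α s i k x * (pd s (b β j r q) x - pd q (b β j r s) x))
       + (∑ s, b α s j k x * (pd s (b β r i q) x - pd q (b β r i s) x))
       + (∑ s, b α s r k x * (pd s (b β i j q) x - pd q (b β i j s) x))) = 0)

/-- the two-component degenerate operator (2D_2cmpt_1) with ε = 1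
satisfies Mokhov's conditions on the domain u¹ ≠ 0. -/
theorem stmt1
    (g : Fin 2 → Fin 2 → Fin 2 → (Fin 2 → ℝ) → ℝ)
    (b : Fin 2 → Fin 2 → Fin 2 → Fin 2 → (Fin 2 → ℝ) → ℝ)
    (hgx : ∀ i j x, g 0 i j x = if i = 0 ∧ j = 0 then 1 else 0)
    (hgy : ∀ i j x, g 1 i j x = if i = 0 ∧ j = 0 then x 1 else 0)
    (hbx : ∀ i j k x, b 0 i j k x =
      if i = 1 ∧ j = 0 ∧ k = 1 then 1 / x 0
      else if i = 0 ∧ j = 1 ∧ k = 1 then -(1 / x 0)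
      else 0)
    (hby : ∀ i j k x, b 1 i j k x =
      if i = 0 ∧ j = 0 ∧ k = 1 then 1 / 2
      else if i = 1 ∧ j = 0 ∧ k = 1 then x 1 / x 0
      else if i = 0 ∧ j = 1 ∧ k = 1 then -(x 1 / x 0)
      else 0) :
    Mokhov 2 2 {x | x 0 ≠ 0} g b := by
  have hg0 : ∀ i j, g 0 i j = fun x => if i = 0 ∧ j = 0 then (1:ℝ) else 0 :=
    fun i j => funext (hgx i j)
  have hg1 : ∀ i j, g 1 i j = fun x : Fin 2 → ℝ => if i = 0 ∧ j = 0 then x 1 else 0 :=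
    fun i j => funext (hgy i j)
  have hb0 : ∀ i j k, b 0 i j k = fun x : Fin 2 → ℝ =>
      if i = 1 ∧ j = 0 ∧ k = 1 then 1 / x 0
      else if i = 0 ∧ j = 1 ∧ k = 1 then -(1 / x 0) else 0 :=
    fun i j k => funext (hbx i j k)
  have hb1 : ∀ i j k, b 1 i j k = fun x : Fin 2 → ℝ =>
      if i = 0 ∧ j = 0 ∧ k = 1 then 1 / 2
      else if i = 1 ∧ j = 0 ∧ k = 1 then x 1 / x 0
      else if i = 0 ∧ j = 1 ∧ k = 1 then -(x 1 / x 0) else 0 :=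
    fun i j k => funext (hby i j k)
  have hmok : ∀ (y : Fin 2 → ℝ), y 0 ≠ 0 → ∀ α β i j r q, mokA5 g b α β i j r q y = 0 := by
    intro y hy
    simp only [Fin.forall_fin_two]
    repeat' constructor
    all_goals
      simp only [mokA5, Fin.sum_univ_two, hg0, hg1, hb0, hb1]
    all_goals
      norm_num [pd_const, pd_coord, pd_neg, pd_inv, pd_inv', pd_ratio, pd_ratio', hy]
    all_goals field_simp
    all_goals ring
  have hUopen : IsOpen {x : Fin 2 → ℝ | x 0 ≠ 0} :=
    isOpen_compl_singleton.preimage (continuous_apply 0)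
  have hpdmok : ∀ (x : Fin 2 → ℝ), x 0 ≠ 0 → ∀ α β i j r q k,
      pd k (mokA5 g b α β i j r q) x = 0 := by
    intro x hx α β i j r q k
    have hev : mokA5 g b α β i j r q =ᶠ[nhds x] (fun _ => 0) := by
      filter_upwards [hUopen.mem_nhds hx] with y hy
      exact hmok y hy α β i j r q
    rw [pd, hev.fderiv_eq]
    simp
  refine ⟨?_, ?_, ?_, ?_, ?_, ?_, ?_⟩
  · -- (a1)
    intro x hx
    simp only [Fin.forall_fin_two]
    repeat' constructor
    all_goals norm_num [hgx, hgy]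
  · -- (a2)
    intro x hx
    simp only [Fin.forall_fin_two]
    repeat' constructor
    all_goals
      simp only [hg0, hg1, hbx, hby]
    all_goals
      norm_num [pd_const, pd_coord]
  · -- (a3)
    intro x hx
    simp only [Fin.forall_fin_two]
    repeat' constructor
    all_goals
      simp only [Fin.sum_univ_two]
    all_goals
      norm_num [hgx, hgy, hbx, hby]
    all_goals field_simp
    all_goals ring
  · -- (a4)
    intro x hx
    simp only [Fin.forall_fin_two]
    repeat' constructor
    all_goals
      simp only [Fin.sum_univ_two]
    all_goals
      norm_num [hgx, hgy, hbx, hby]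
    all_goals field_simp
    all_goals ring
  · -- (a5)
    intro x hx α β i j r q
    rw [hmok x hx α β i j r q, hmok x hx β α i j r q, add_zero]
  · -- (a6)
    intro x hx
    have hx' : x 0 ≠ 0 := hx
    simp only [Fin.forall_fin_two]
    repeat' constructor
    all_goals
      simp only [Fin.sum_univ_two, hg0, hg1, hb0, hb1]
    all_goals
      norm_num [pd_const, pd_coord, pd_neg, pd_inv, pd_inv', pd_ratio, pd_ratio', hx']
    all_goals try tauto
    all_goals field_simp
    all_goals try ring
    all_goals tauto
  · -- (a7)
    intro x hx α β i j r q k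
    have hx' : x 0 ≠ 0 := hx
    rw [hpdmok x hx α β i j r q k, hpdmok x hx β α i j r k q]
    revert k q
    simp only [Fin.forall_fin_two]
    revert α β i j r
    simp only [Fin.forall_fin_two]
    repeat' constructor
    all_goals
      simp only [Fin.sum_univ_two, hb0, hb1]
    all_goals
      norm_num [pd_const, pd_coord, pd_neg, pd_inv, pd_inv', pd_ratio, pd_ratio', hx']
    all_goals field_simp
    all_goals ring
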